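/- arXiv:2112.08585 — 5 statements merged into one kernel-verified Lean document; each statement's English description precedes it below -/
import Mathlib

section
/- Let n > 1 be an integer, d ≥ 2 an integer, and r an integer with n - ⌊(n-1)d/2⌋ ≤ r ≤ n and n ≡ r (mod d). Let (c(k)) be a sequence of complex numbers such that c(k) = 0 for (n-r)/d < k ≤ n-1, and such that c(ln+k) = c(ln)·c(k) for all nonnegative integers l and k with 0 ≤ k ≤ n-1. Then for all nonnegative integers l and 0 ≤ k ≤ n-1: ∑_{j=0}^{ln+k} c(j)c(ln+k-j) = (∑_{t=0}^{l} c(tn)c((l-t)n)) · (∑_{j=0}^{k} c(j)c(k-j)). -/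
open Finset

theorem stmt1 (n d : ℤ) (r : ℤ) (hn : 1 < n) (hd : 2 ≤ d)
    (hr1 : n - (n - 1) * d / 2 ≤ r) (hr2 : r ≤ n) (hmod : n ≡ r [ZMOD d])
    (c : ℕ → ℂ)
    (hzero : ∀ k : ℕ, (n - r) / d < (k : ℤ) → (k : ℤ) ≤ n - 1 → c k = 0)
    (hmul : ∀ l k : ℕ, (k : ℤ) ≤ n - 1 → c (l * n.toNat + k) = c (l * n.toNat) * c k) :
    ∀ l k : ℕ, (k : ℤ) ≤ n - 1 →
      ∑ j ∈ range (l * n.toNat + k + 1), c j * c (l * n.toNat + k - j) =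
        (∑ t ∈ range (l + 1), c (t * n.toNat) * c ((l - t) * n.toNat)) *
          (∑ j ∈ range (k + 1), c j * c (k - j)) := by
  intro l k hk
  set N := n.toNat with hNdef
  have hNn : (N : ℤ) = n := by omega
  have hkN : k < N := by omega
  have hN0 : 0 < N := by omega
  have h2m : 2 * ((n - r) / d) ≤ n - 1 := by
    have h1 := Int.emod_nonneg (n - r) (by omega : d ≠ 0)
    rw [Int.emod_def] at h1
    have h2 : n - r ≤ (n - 1) * d / 2 := by linarith
    have h3 := Int.emod_nonneg ((n - 1) * d) (by omega : (2:ℤ) ≠ 0)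
    rw [Int.emod_def] at h3
    have e1 : d * (2 * ((n - r) / d)) = 2 * (d * ((n - r) / d)) := by ring
    have e2 : d * (n - 1) = (n - 1) * d := by ring
    have hdd : d * (2 * ((n - r) / d)) ≤ d * (n - 1) := by linarith
    exact le_of_mul_le_mul_left hdd (by omega)
  generalize hgen : (n - r) / d = m at hzero h2m
  have key : ∀ i : ℕ, k < i → i < N → c i * c (N + k - i) = 0 := by
    intro i hki hiN
    by_cases h1 : c i = 0
    · rw [h1, zero_mul]
    · have hi : (i : ℤ) ≤ m := by
        by_contra h
        exact h1 (hzero i (by omega) (by omega))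
      have h2 : c (N + k - i) = 0 := by
        by_contra h2
        have : ((N + k - i : ℕ) : ℤ) ≤ m := by
          by_contra h
          exact h2 (hzero _ (by omega) (by omega))
        omega
      rw [h2, mul_zero]
  have hmod2 : ∀ q i : ℕ, i < N → (q * N + i) % N = i := by
    intro q i hiN
    rw [add_comm, Nat.add_mul_mod_self_right, Nat.mod_eq_of_lt hiN]
  have hdiv2 : ∀ q i : ℕ, i < N → (q * N + i) / N = q := by
    intro q i hiN
    rw [add_comm, Nat.add_mul_div_right _ _ hN0, Nat.div_eq_of_lt hiN, zero_add]
  have hvan : ∀ j ∈ range (l * N + k + 1),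
      j ∉ (range (l * N + k + 1)).filter (fun j => j % N ≤ k) →
      c j * c (l * N + k - j) = 0 := by
    intro j hj hj'
    simp only [mem_filter, not_and, not_le] at hj'
    have hjle : j ≤ l * N + k := by
      have := mem_range.mp hj; omega
    obtain ⟨q, i, hik, hiN, rfl⟩ : ∃ q i, k < i ∧ i < N ∧ j = q * N + i :=
      ⟨j / N, j % N, hj' hj, Nat.mod_lt _ hN0, by
        rw [mul_comm]; exact (Nat.div_add_mod j N).symm⟩
    have hql : q < l := by
      by_contra h
      push_neg at h
      have h1 : l * N ≤ q * N := Nat.mul_le_mul_right _ h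
      omega
    obtain ⟨u, hu⟩ : ∃ u, l = q + 1 + u := ⟨l - (q + 1), by omega⟩
    have hrw : l * N + k - (q * N + i) = u * N + (N + k - i) := by
      have h1 : l * N = q * N + N + u * N := by rw [hu]; ring
      omega
    rw [hrw, hmul q i (by omega), hmul u (N + k - i) (by omega)]
    have h0 := key i hik hiN
    rcases mul_eq_zero.mp h0 with h | h <;> rw [h] <;> ring
  have hbij : ∑ j ∈ (range (l * N + k + 1)).filter (fun j => j % N ≤ k),
        c j * c (l * N + k - j)
      = ∑ p ∈ range (l + 1) ×ˢ range (k + 1),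
          c (p.1 * N) * c ((l - p.1) * N) * (c p.2 * c (k - p.2)) := by
    refine Finset.sum_nbij' (fun j => (j / N, j % N)) (fun p => p.1 * N + p.2)
      ?_ ?_ ?_ ?_ ?_
    · intro j hj
      simp only [mem_filter, mem_range] at hj
      simp only [mem_product, mem_range]
      refine ⟨?_, by omega⟩
      have hlt : j < (l + 1) * N := by
        have : (l + 1) * N = l * N + N := by ring
        omega
      exact Nat.div_lt_of_lt_mul (by rwa [mul_comm] at hlt)
    · intro p hp
      simp only [mem_product, mem_range] at hp
      simp only [mem_filter, mem_range]
      have h1 : p.1 * N ≤ l * N := Nat.mul_le_mul_right _ (by omega)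
      have h2 : (p.1 * N + p.2) % N = p.2 := hmod2 _ _ (by omega)
      exact ⟨by omega, by omega⟩
    · intro j hj
      dsimp only
      rw [mul_comm]
      exact Nat.div_add_mod j N
    · intro p hp
      simp only [mem_product, mem_range] at hp
      exact Prod.ext (hdiv2 _ _ (by omega)) (hmod2 _ _ (by omega))
    · intro j hj
      simp only [mem_filter, mem_range] at hj
      dsimp only
      obtain ⟨q, i, hiN, rfl⟩ : ∃ q i, i < N ∧ j = q * N + i :=
        ⟨j / N, j % N, Nat.mod_lt _ hN0, by
          rw [mul_comm]; exact (Nat.div_add_mod j N).symm⟩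
      have hmi := hmod2 q i hiN
      have hdi := hdiv2 q i hiN
      have hik : i ≤ k := by omega
      have hql : q ≤ l := by
        by_contra h
        push_neg at h
        have h1 : (l + 1) * N ≤ q * N := Nat.mul_le_mul_right _ h
        have h2 : (l + 1) * N = l * N + N := by ring
        omega
      obtain ⟨u, hu⟩ : ∃ u, l = q + u := ⟨l - q, by omega⟩
      have hrw : l * N + k - (q * N + i) = u * N + (k - i) := by
        have h1 : l * N = q * N + u * N := by rw [hu]; ring
        omega
      have hlu : l - q = u := by omega
      rw [hmi, hdi, hrw, hmul q i (by omega), hmul u (k - i) (by omega), hlu]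
      ring
  calc ∑ j ∈ range (l * N + k + 1), c j * c (l * N + k - j)
      = ∑ j ∈ (range (l * N + k + 1)).filter (fun j => j % N ≤ k),
          c j * c (l * N + k - j) :=
        (Finset.sum_subset (filter_subset _ _) hvan).symm
    _ = ∑ p ∈ range (l + 1) ×ˢ range (k + 1),
          c (p.1 * N) * c ((l - p.1) * N) * (c p.2 * c (k - p.2)) := hbij
    _ = ∑ t ∈ range (l + 1), ∑ j ∈ range (k + 1),
          c (t * N) * c ((l - t) * N) * (c j * c (k - j)) := by
        rw [Finset.sum_product]
    _ = (∑ t ∈ range (l + 1), c (t * N) * c ((l - t) * N)) *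
          (∑ j ∈ range (k + 1), c j * c (k - j)) := (Finset.sum_mul_sum _ _ _ _).symm
end

section
/- Let n be a positive integer, d ≥ 3 an integer, and r an integer with n ≡ r (mod d) and n - ⌊d(n-1)/3⌋ ≤ r ≤ n. Let (c(k)) be a sequence of complex numbers with c(k) = 0 for (n-r)/d < k < n, and with c(ln+k) = c(ln)·c(k) for all nonnegative integers l, k with 0 ≤ k ≤ n-1. Then for all nonnegative integers l and 0 ≤ k ≤ n-1: ∑_{i+j+s = ln+k} c(i)c(j)c(s) = (∑_{a=0}^{l} c(an) ∑_{t=0}^{l-a} c(tn)c((l-a-t)n)) · (∑_{i=0}^{k} c(i) ∑_{j=0}^{k-i} c(j)c(k-i-j)), where the left sum runs over triples (i,j,s) of nonnegative integers with i+j+s = ln+k. -/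
open Finset

private lemma sum_tri (N : ℕ) (F : ℕ → ℕ → ℂ) :
    ∑ i ∈ range (N + 1), ∑ j ∈ range (N - i + 1), F i j =
      ∑ p ∈ (range (N + 1) ×ˢ range (N + 1)).filter (fun p => p.1 + p.2 ≤ N),
        F p.1 p.2 := by
  rw [Finset.sum_filter, Finset.sum_product]
  refine Finset.sum_congr rfl fun i hi => ?_
  rw [← Finset.sum_filter]
  congr 1
  ext j
  simp only [Finset.mem_filter, Finset.mem_range, Finset.mem_range] at *
  omega

theorem stmt3 (n d : ℤ) (r : ℤ) (hn : 0 < n) (hd : 3 ≤ d)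
    (hr1 : n - d * (n - 1) / 3 ≤ r) (hr2 : r ≤ n) (hmod : n ≡ r [ZMOD d])
    (c : ℕ → ℂ)
    (hzero : ∀ k : ℕ, (n - r) / d < (k : ℤ) → (k : ℤ) < n → c k = 0)
    (hmul : ∀ l k : ℕ, (k : ℤ) ≤ n - 1 → c (l * n.toNat + k) = c (l * n.toNat) * c k) :
    ∀ l k : ℕ, (k : ℤ) ≤ n - 1 →
      ∑ i ∈ range (l * n.toNat + k + 1), ∑ j ∈ range (l * n.toNat + k - i + 1),
          c i * c j * c (l * n.toNat + k - i - j) =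
        (∑ a ∈ range (l + 1), c (a * n.toNat) *
            ∑ t ∈ range (l - a + 1), c (t * n.toNat) * c ((l - a - t) * n.toNat)) *
          (∑ i ∈ range (k + 1), c i * ∑ j ∈ range (k - i + 1), c j * c (k - i - j)) := by
  intro l k hk
  obtain ⟨nn, hnn_def⟩ : ∃ m : ℕ, m = n.toNat := ⟨_, rfl⟩
  rw [← hnn_def] at hmul ⊢
  have hnn : 1 ≤ nn := by omega
  have hnnZ : (nn : ℤ) = n := by omega
  -- the threshold m0
  have hdvd : d ∣ n - r := (Int.ModEq.dvd hmod.symm)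
  have h1 : (n - r) / d * d = n - r := Int.ediv_mul_cancel hdvd
  have h2 : 0 ≤ (n - r) / d := Int.ediv_nonneg (by omega) (by omega)
  have hq : 3 * (d * (n - 1) / 3) ≤ d * (n - 1) := by
    have := Int.mul_ediv_add_emod (d * (n - 1)) 3
    have := Int.emod_nonneg (d * (n - 1)) (by norm_num : (3:ℤ) ≠ 0)
    omega
  have key : 3 * ((n - r) / d) ≤ n - 1 := by
    have e : d * (3 * ((n - r) / d)) = 3 * (n - r) := by linear_combination 3 * h1
    have h3 : d * (3 * ((n - r) / d)) ≤ d * (n - 1) := by linarith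
    exact le_of_mul_le_mul_left h3 (by omega)
  obtain ⟨m0, hm0_def⟩ : ∃ m : ℕ, m = ((n - r) / d).toNat := ⟨_, rfl⟩
  have hm0Z : (m0 : ℤ) = (n - r) / d := by rw [hm0_def]; exact Int.toNat_of_nonneg h2
  have hm0 : 3 * m0 + 1 ≤ nn := by omega
  have hkn : k + 1 ≤ nn := by omega
  -- factorization of c
  have hfac : ∀ m : ℕ, c m = c (m / nn * nn) * c (m % nn) := by
    intro m
    have hlt : m % nn < nn := Nat.mod_lt m (by omega)
    have := hmul (m / nn) (m % nn) (by push_cast; omega)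
    have hdm : m / nn * nn + m % nn = m := by
      rw [Nat.mul_comm]; exact Nat.div_add_mod m nn
    rwa [hdm] at this
  have hzero' : ∀ m : ℕ, m0 < m % nn → c m = 0 := by
    intro m h
    have hlt : m % nn < nn := Nat.mod_lt m (by omega)
    rw [hfac m, hzero (m % nn) (by rw [← hm0Z]; exact_mod_cast h)
      (by rw [← hnnZ]; exact_mod_cast hlt), mul_zero]
  obtain ⟨N, hN_def⟩ : ∃ m : ℕ, m = l * nn + k := ⟨_, rfl⟩
  rw [← hN_def]
  -- rewrite LHS
  rw [sum_tri N (fun i j => c i * c j * c (N - i - j))]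
  -- rewrite RHS
  have eA : (∑ a ∈ range (l + 1), c (a * nn) *
        ∑ t ∈ range (l - a + 1), c (t * nn) * c ((l - a - t) * nn)) =
      ∑ p ∈ (range (l + 1) ×ˢ range (l + 1)).filter (fun p => p.1 + p.2 ≤ l),
        c (p.1 * nn) * (c (p.2 * nn) * c ((l - p.1 - p.2) * nn)) := by
    rw [← sum_tri l (fun a b => c (a * nn) * (c (b * nn) * c ((l - a - b) * nn)))]
    exact Finset.sum_congr rfl fun a _ => Finset.mul_sum _ _ _
  have eB : (∑ i ∈ range (k + 1), c i *
        ∑ j ∈ range (k - i + 1), c j * c (k - i - j)) =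
      ∑ p ∈ (range (k + 1) ×ˢ range (k + 1)).filter (fun p => p.1 + p.2 ≤ k),
        c p.1 * (c p.2 * c (k - p.1 - p.2)) := by
    rw [← sum_tri k (fun i j => c i * (c j * c (k - i - j)))]
    exact Finset.sum_congr rfl fun i _ => Finset.mul_sum _ _ _
  rw [eA, eB, Finset.sum_mul_sum, ← Finset.sum_product']
  -- the bijection
  refine (Finset.sum_of_injOn
      (fun x => (x.1.1 * nn + x.2.1, x.1.2 * nn + x.2.2)) ?_ ?_ ?_ ?_).symm
  · -- injective
    rintro ⟨⟨a, b⟩, ⟨i, j⟩⟩ hx ⟨⟨a', b'⟩, ⟨i', j'⟩⟩ hy hxy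
    simp only [Finset.coe_filter, Finset.mem_product, Finset.mem_filter,
      Finset.mem_range, Set.mem_setOf_eq, Finset.mem_coe] at hx hy
    simp only [Prod.mk.injEq] at hxy ⊢
    obtain ⟨h1', h2'⟩ := hxy
    have hi : i < nn := by omega
    have hi' : i' < nn := by omega
    have hj : j < nn := by omega
    have hj' : j' < nn := by omega
    have e1 : (a * nn + i) % nn = (a' * nn + i') % nn := by rw [h1']
    have e2 : (b * nn + j) % nn = (b' * nn + j') % nn := by rw [h2']
    rw [Nat.add_comm, Nat.add_mul_mod_self_right, Nat.add_comm, Nat.add_mul_mod_self_right,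
      Nat.mod_eq_of_lt hi, Nat.mod_eq_of_lt hi'] at e1
    rw [Nat.add_comm, Nat.add_mul_mod_self_right, Nat.add_comm, Nat.add_mul_mod_self_right,
      Nat.mod_eq_of_lt hj, Nat.mod_eq_of_lt hj'] at e2
    subst e1 e2
    have ha2 : a * nn = a' * nn := by omega
    have hb2 : b * nn = b' * nn := by omega
    exact ⟨⟨Nat.eq_of_mul_eq_mul_right (by omega) ha2,
      Nat.eq_of_mul_eq_mul_right (by omega) hb2⟩, rfl, rfl⟩
  · -- maps to
    rintro ⟨⟨a, b⟩, ⟨i, j⟩⟩ hx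
    simp only [Finset.coe_filter, Finset.mem_product, Finset.mem_filter,
      Finset.mem_range, Set.mem_setOf_eq, Finset.mem_coe] at hx ⊢
    obtain ⟨⟨⟨ha, hb⟩, hab⟩, ⟨⟨hi, hj⟩, hij⟩⟩ := hx
    have h1' : a * nn ≤ l * nn := Nat.mul_le_mul_right nn (by omega)
    have h2' : b * nn ≤ l * nn := Nat.mul_le_mul_right nn (by omega)
    have h3' : a * nn + b * nn ≤ l * nn := by
      have := Nat.mul_le_mul_right nn hab
      rw [Nat.add_mul] at this; exact this
    refine ⟨⟨?_, ?_⟩, ?_⟩ <;> omega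
  · -- off the image: zero
    rintro ⟨I, J⟩ hIJ hni
    simp only [Finset.mem_filter, Finset.mem_product, Finset.mem_range] at hIJ
    obtain ⟨⟨hI, hJ⟩, hIJle⟩ := hIJ
    obtain ⟨a, i, hilt, rfl⟩ : ∃ a i, i < nn ∧ a * nn + i = I :=
      ⟨I / nn, I % nn, Nat.mod_lt I (by omega),
        by rw [Nat.mul_comm]; exact Nat.div_add_mod I nn⟩
    obtain ⟨b, j, hjlt, rfl⟩ : ∃ b j, j < nn ∧ b * nn + j = J :=
      ⟨J / nn, J % nn, Nat.mod_lt J (by omega),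
        by rw [Nat.mul_comm]; exact Nat.div_add_mod J nn⟩
    have hImod : (a * nn + i) % nn = i := by
      rw [Nat.add_comm, Nat.add_mul_mod_self_right]; exact Nat.mod_eq_of_lt hilt
    have hJmod : (b * nn + j) % nn = j := by
      rw [Nat.add_comm, Nat.add_mul_mod_self_right]; exact Nat.mod_eq_of_lt hjlt
    have hsum1 : (l + 1) * nn = l * nn + nn := by ring
    by_cases hci : m0 < i
    · rw [hzero' _ (by rw [hImod]; exact hci)]; ring
    by_cases hcj : m0 < j
    · rw [mul_comm (c (a * nn + i)), hzero' _ (by rw [hJmod]; exact hcj)]; ring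
    push_neg at hci hcj
    by_cases hcij : i + j ≤ k
    · -- then a + b ≤ l and (I, J) is in the image: contradiction
      exfalso
      have hab : a + b ≤ l := by
        by_contra hab
        push_neg at hab
        have h5 : (l + 1) * nn ≤ (a + b) * nn := Nat.mul_le_mul_right nn (by omega)
        rw [Nat.add_mul a b nn] at h5
        omega
      apply hni
      refine ⟨⟨⟨a, b⟩, ⟨i, j⟩⟩, ?_, by simp⟩
      simp only [Finset.coe_filter, Finset.mem_product, Finset.mem_filter,
        Finset.mem_range, Set.mem_setOf_eq, Finset.mem_coe]
      omega
    · -- third factor is zero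
      push_neg at hcij
      have hab : a + b + 1 ≤ l := by
        by_contra hab
        push_neg at hab
        have h5 : l * nn ≤ (a + b) * nn := Nat.mul_le_mul_right nn (by omega)
        rw [Nat.add_mul a b nn] at h5
        omega
      have hlmul : l * nn = a * nn + b * nn + nn + (l - (a + b + 1)) * nn := by
        conv_lhs => rw [show l = a + b + 1 + (l - (a + b + 1)) by omega]
        ring
      have hM : N - (a * nn + i) - (b * nn + j) =
          (nn + k - i - j) + (l - (a + b + 1)) * nn := by omega
      have hMz : m0 < (N - (a * nn + i) - (b * nn + j)) % nn := by
        rw [hM, Nat.add_mul_mod_self_right, Nat.mod_eq_of_lt (by omega)]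
        omega
      rw [hzero' _ hMz]; ring
  · -- values match
    rintro ⟨⟨a, b⟩, ⟨i, j⟩⟩ hx
    simp only [Finset.mem_product, Finset.mem_filter, Finset.mem_range] at hx
    obtain ⟨⟨⟨ha, hb⟩, hab⟩, ⟨⟨hi, hj⟩, hij⟩⟩ := hx
    have e1 : c (a * nn + i) = c (a * nn) * c i := hmul a i (by push_cast; omega)
    have e2 : c (b * nn + j) = c (b * nn) * c j := hmul b j (by push_cast; omega)
    have hlmul : l * nn = a * nn + b * nn + (l - a - b) * nn := by
      conv_lhs => rw [show l = a + b + (l - a - b) by omega]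
      ring
    have e3 : N - (a * nn + i) - (b * nn + j) = (l - a - b) * nn + (k - i - j) := by
      omega
    rw [e3]
    have e4 : c ((l - a - b) * nn + (k - i - j)) = c ((l - a - b) * nn) * c (k - i - j) :=
      hmul _ _ (by push_cast; omega)
    simp only [e1, e2, e4]
    ring
end

section
/- For any odd prime p, ∑_{k=0}^{p-1} (1/16^k) ∑_{j=0}^{k} C(2j,j)² C(2k-2j,k-j)² (4j+1)(4k-4j+1) ≡ 0 (mod p³), where C(m,r) denotes the binomial coefficient. -/
open Finset

lemma bb_step (n : ℕ) : (n+1) * (2*(n+1)).choose (n+1) = 2*(2*n+1) * ((2*n).choose n) := by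
  have h1 := Nat.add_one_mul_choose_eq (2*n) n
  have h2 : (2*(n+1)).choose (n+1) = (2*n+1).choose n + (2*n+1).choose (n+1) := by
    have h : 2*(n+1) = (2*n+1)+1 := by ring
    rw [h, Nat.choose_succ_succ]
  have h3 := Nat.choose_symm_half n
  rw [h2, h3.symm, ← two_mul]
  calc (n+1)*(2*((2*n+1).choose (n+1))) = 2*((2*n+1).choose (n+1) * (n+1)) := by ring
  _ = 2*((2*n+1)*((2*n).choose n)) := by rw [← h1]
  _ = 2*(2*n+1) * ((2*n).choose n) := by ring

/-- WZ-type identity: 4 ∑_{k<n} 16^(n-1-k) (4k+1) C(2k,k)^2 = n^2 C(2n,n)^2 -/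
lemma I1 (n : ℕ) :
    4 * ∑ k ∈ range n, 16^(n-1-k) * (4*k+1) * ((2*k).choose k)^2 = n^2 * ((2*n).choose n)^2 := by
  induction n with
  | zero => simp
  | succ n ih =>
    rw [Finset.sum_range_succ]
    have hre : ∀ k ∈ range n, 16^(n+1-1-k) * (4*k+1) * ((2*k).choose k)^2
        = 16 * (16^(n-1-k) * (4*k+1) * ((2*k).choose k)^2) := by
      intro k hk
      rw [Finset.mem_range] at hk
      have : n+1-1-k = (n-1-k)+1 := by omega
      rw [this, pow_succ]; ring
    rw [Finset.sum_congr rfl hre, ← Finset.mul_sum]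
    have e1 : n+1-1-n = 0 := by omega
    rw [e1]
    have key : (n+1)^2 * ((2*(n+1)).choose (n+1))^2 = (2*(2*n+1))^2 * ((2*n).choose n)^2 := by
      calc (n+1)^2 * ((2*(n+1)).choose (n+1))^2 = ((n+1) * (2*(n+1)).choose (n+1))^2 := by ring
      _ = (2*(2*n+1) * ((2*n).choose n))^2 := by rw [bb_step]
      _ = (2*(2*n+1))^2 * ((2*n).choose n)^2 := by ring
    rw [key]
    rw [Nat.mul_add, ← Nat.mul_assoc 4 16, Nat.mul_comm 4 16, Nat.mul_assoc 16 4, ih]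
    ring

section
variable {p : ℕ}

lemma L5 (hp : p.Prime) (k : ℕ) (hk : k ≤ p - 1) : ((Nat.choose (p-1) k : ℕ) : ZMod p) = (-1)^k := by
  induction k with
  | zero => simp
  | succ k ih =>
    have hp1 : 1 ≤ p := hp.one_lt.le
    have hps : p - 1 + 1 = p := by omega
    have hpas : (p-1+1).choose (k+1) = (p-1).choose k + (p-1).choose (k+1) :=
      Nat.choose_succ_succ _ _
    rw [hps] at hpas
    have hdvd : p ∣ p.choose (k+1) := hp.dvd_choose_self (by omega) (by omega)
    have h0 : ((p.choose (k+1) : ℕ) : ZMod p) = 0 :=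
      (ZMod.natCast_eq_zero_iff _ _).mpr hdvd
    rw [hpas] at h0
    push_cast at h0
    have ihv := ih (by omega)
    have : ((Nat.choose (p-1) (k+1) : ℕ) : ZMod p) = -((Nat.choose (p-1) k : ℕ) : ZMod p) := by
      linear_combination h0
    rw [this, ihv]
    ring

lemma L4 (hp : p.Prime) (j : ℕ) (hj1 : 2*j ≥ p) (hj2 : j < p) : p ∣ (2*j).choose j := by
  have := Nat.Prime.dvd_choose_add hp hj2 hj2 (by omega)
  rwa [← two_mul] at this

end

section Star
variable {p m : ℕ}

lemma star_base (hp : p.Prime) (hpm : p = 2*m-1) (hm : 2 ≤ m)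
    (β : ℤ) (hβ : (((2*m).choose m : ℕ) : ℤ) = p * β) :
    (((m-1 : ℕ) : ZMod p) * (((2*(m-1)).choose (m-1) : ℕ) : ZMod p) * (β : ZMod p)) = -2 := by
  haveI : Fact p.Prime := ⟨hp⟩
  have hp3 : 3 ≤ p := by omega
  -- b_m = 2 * choose p m
  have f1 : (2*m).choose m = 2 * (p.choose m) := by
    have h2m : 2*m = p+1 := by omega
    have hpas : (p+1).choose (m-1+1) = p.choose (m-1) + p.choose (m-1+1) :=
      Nat.choose_succ_succ _ _
    have hm1 : m - 1 + 1 = m := by omega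
    rw [hm1] at hpas
    have hsymm : p.choose (m-1) = p.choose m := by
      apply Nat.choose_symm_of_eq_add; omega
    rw [h2m, hpas, hsymm, two_mul]
  have f2 : m * p.choose m = p * ((p-1).choose (m-1)) := by
    have := Nat.add_one_mul_choose_eq (p-1) (m-1)
    have e1 : p - 1 + 1 = p := by omega
    have e2 : m - 1 + 1 = m := by omega
    rw [e1, e2] at this
    rw [this, Nat.mul_comm]
  -- m β = 2 * choose (p-1) (m-1) in ℤ
  have f3 : (m : ℤ) * β = 2 * (((p-1).choose (m-1) : ℕ) : ℤ) := by
    have hpne : (p : ℤ) ≠ 0 := by exact_mod_cast hp.ne_zero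
    apply mul_left_cancel₀ hpne
    have : (m : ℤ) * ((p:ℤ) * β) = (m : ℤ) * (((2*m).choose m : ℕ) : ℤ) := by rw [hβ]
    push_cast [f1, f2] at this ⊢
    push_cast at this
    linarith [this]
  have hL5 : (((p-1).choose (m-1) : ℕ) : ZMod p) = (-1)^(m-1) := L5 hp _ (by omega)
  have hb : ((2*(m-1)).choose (m-1)) = (p-1).choose (m-1) := by
    congr 1; omega
  have hmne : ((m : ℕ) : ZMod p) ≠ 0 := by
    rw [Ne, ZMod.natCast_eq_zero_iff]
    intro hdvd
    have := Nat.le_of_dvd (by omega) hdvd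
    omega
  apply mul_left_cancel₀ hmne
  have f3' : ((m : ℕ) : ZMod p) * (β : ZMod p) = 2 * (-1)^(m-1) := by
    have := congrArg (fun z : ℤ => (z : ZMod p)) f3
    push_cast at this
    rw [this, hL5]
  have hcast : (((m-1 : ℕ)) : ZMod p) = ((m : ℕ) : ZMod p) - 1 := by
    push_cast [Nat.cast_sub (by omega : 1 ≤ m)]; ring
  rw [hb, hcast, hL5]
  have hsq : ((-1 : ZMod p)^(m-1))^2 = 1 := by
    rw [← pow_mul, pow_mul']; simp
  have h2p : (2 : ZMod p) * ((p : ℕ) : ZMod p) = 0 := by simp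
  have hpz : ((p : ℕ) : ZMod p) = 0 := ZMod.natCast_self p
  have h2m : (2 : ZMod p) * ((m:ℕ) : ZMod p) = ((p:ℕ) : ZMod p) + 1 := by
    have : (2*m : ℕ) = p + 1 := by omega
    calc (2 : ZMod p) * ((m:ℕ) : ZMod p) = ((2*m : ℕ) : ZMod p) := by push_cast; ring
    _ = ((p+1 : ℕ) : ZMod p) := by rw [this]
    _ = ((p:ℕ) : ZMod p) + 1 := by push_cast; ring
  calc ((m:ℕ) : ZMod p) * ((((m:ℕ) : ZMod p) - 1) * (-1)^(m-1) * (β : ZMod p))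
      = (((m:ℕ) : ZMod p) - 1) * (-1)^(m-1) * (((m:ℕ):ZMod p) * (β : ZMod p)) := by ring
  _ = (((m:ℕ) : ZMod p) - 1) * (-1)^(m-1) * (2 * (-1)^(m-1)) := by rw [f3']
  _ = 2 * (((m:ℕ) : ZMod p) - 1) * ((-1 : ZMod p)^(m-1))^2 := by ring
  _ = 2 * (((m:ℕ) : ZMod p) - 1) := by rw [hsq]; ring
  _ = (2 * ((m:ℕ) : ZMod p)) - 2 := by ring
  _ = ((p:ℕ) : ZMod p) + 1 - 2 := by rw [h2m]
  _ = -1 := by rw [hpz]; ring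
  _ = ((m:ℕ) : ZMod p) * (-2) := by
      have : (2 : ZMod p) * ((m:ℕ) : ZMod p) = 1 := by rw [h2m, hpz]; ring
      linear_combination this

end Star

section Star2
variable {p m : ℕ}

lemma star (hp : p.Prime) (hpm : p = 2*m-1) (hm : 2 ≤ m)
    (i : ℕ) (h1 : 1 ≤ i) (h2 : i ≤ m-1)
    (β : ℤ) (hβ : (((2*(p-i)).choose (p-i) : ℕ) : ℤ) = p * β) :
    ((i : ℕ) : ZMod p) * (((2*i).choose i : ℕ) : ZMod p) * (β : ZMod p) = -2 := by
  haveI : Fact p.Prime := ⟨hp⟩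
  have hp3 : 3 ≤ p := by omega
  have key : ∀ d i, i = m-1-d → 1 ≤ i →
      ∀ β : ℤ, (((2*(p-i)).choose (p-i) : ℕ) : ℤ) = p * β →
      ((i : ℕ) : ZMod p) * (((2*i).choose i : ℕ) : ZMod p) * (β : ZMod p) = -2 := by
    intro d
    induction d with
    | zero =>
      intro i hi h1 β hβ
      have hieq : i = m - 1 := by omega
      subst hieq
      have hpi : p - (m-1) = m := by omega
      rw [hpi] at hβ
      exact star_base hp hpm hm β hβ
    | succ d IH =>
      intro i hi h1 β hβ
      have hi' : i + 1 = m - 1 - d := by omega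
      have hile : i + 1 ≤ m - 1 := by omega
      -- get β' for p - (i+1)
      have hdvd : p ∣ (2*(p-(i+1))).choose (p-(i+1)) := by
        apply L4 hp
        · omega
        · omega
      obtain ⟨c, hc⟩ := hdvd
      have hβ' : (((2*(p-(i+1))).choose (p-(i+1)) : ℕ) : ℤ) = p * (c : ℤ) := by
        exact_mod_cast congrArg (Nat.cast : ℕ → ℤ) hc
      have IHv := IH (i+1) (by omega) (by omega) (c : ℤ) hβ'
      -- integer identity relating β and c
      have hstep := bb_step (p-(i+1))
      have e1 : p - (i+1) + 1 = p - i := by omega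
      rw [e1] at hstep
      have hZ : ((p - i : ℕ) : ℤ) * ((p:ℤ) * β)
          = 2*(2*((p-(i+1) : ℕ) : ℤ)+1) * ((p:ℤ) * (c:ℤ)) := by
        rw [← hβ, ← hβ']
        exact_mod_cast congrArg (Nat.cast : ℕ → ℤ) hstep
      have hpne : (p : ℤ) ≠ 0 := by exact_mod_cast hp.ne_zero
      have hZ2 : ((p - i : ℕ) : ℤ) * β = 2*(2*((p-(i+1) : ℕ) : ℤ)+1) * (c:ℤ) := by
        apply mul_left_cancel₀ hpne
        linear_combination hZ
      -- cast to ZMod p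
      have hz : ((p - i : ℕ) : ZMod p) * (β : ZMod p)
          = 2*(2*((p-(i+1) : ℕ) : ZMod p)+1) * ((c:ℤ) : ZMod p) := by
        have := congrArg (fun z : ℤ => (z : ZMod p)) hZ2
        push_cast at this ⊢
        convert this using 2 <;> push_cast <;> ring
      have hc1 : ((p - i : ℕ) : ZMod p) = -((i : ℕ) : ZMod p) := by
        rw [Nat.cast_sub (by omega : i ≤ p)]
        simp
      have hc2 : ((p - (i+1) : ℕ) : ZMod p) = -(((i:ℕ) : ZMod p) + 1) := by
        rw [Nat.cast_sub (by omega : i+1 ≤ p)]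
        push_cast
        simp
      rw [hc1, hc2] at hz
      -- bb_step at i, cast to ZMod p
      have hbs : (((i+1 : ℕ)) : ZMod p) * (((2*(i+1)).choose (i+1) : ℕ) : ZMod p)
          = 2*(2*((i:ℕ) : ZMod p)+1) * (((2*i).choose i : ℕ) : ZMod p) := by
        have := congrArg (fun n : ℕ => (n : ZMod p)) (bb_step i)
        push_cast at this ⊢
        linear_combination this
      push_cast at IHv hbs hz ⊢
      linear_combination (-(((2*i).choose i : ℕ) : ZMod p)) * hz
        - ((c : ℕ) : ZMod p) * hbs + IHv
  exact key (m-1-i) i (by omega) h1 β hβ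

end Star2

section CC
variable {p m : ℕ}

lemma gauss_int (m p : ℕ) (hm : 2 ≤ m) (hmp : m ≤ p) (hpm : p = 2*m-1) :
    (∑ l ∈ Finset.Ico m p, ((16*l+4 : ℕ) : ℤ)) = 12*((m:ℤ)-1)*p := by
  have hpZ : (p : ℤ) = 2*(m:ℤ) - 1 := by
    have h := congrArg (Nat.cast : ℕ → ℤ) hpm
    push_cast [Nat.cast_sub (by omega : 1 ≤ 2*m)] at h
    linarith
  have hGpZ : (∑ i ∈ range p, (i:ℤ)) * 2 = (p:ℤ) * ((p:ℤ)-1) := by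
    have h := congrArg (Nat.cast : ℕ → ℤ) (Finset.sum_range_id_mul_two p)
    push_cast [Nat.cast_sub (by omega : 1 ≤ p)] at h
    linarith
  have hGmZ : (∑ i ∈ range m, (i:ℤ)) * 2 = (m:ℤ) * ((m:ℤ)-1) := by
    have h := congrArg (Nat.cast : ℕ → ℤ) (Finset.sum_range_id_mul_two m)
    push_cast [Nat.cast_sub (by omega : 1 ≤ m)] at h
    linarith
  have hlin : ∀ n : ℕ, (∑ l ∈ range n, ((16*l+4 : ℕ) : ℤ))
      = 16 * (∑ i ∈ range n, (i:ℤ)) + 4*n := by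
    intro n
    rw [Finset.sum_congr rfl (fun x _ => by push_cast; ring :
      ∀ x ∈ range n, ((16*x+4 : ℕ) : ℤ) = 16*(x:ℤ) + 4)]
    rw [Finset.sum_add_distrib, ← Finset.mul_sum, Finset.sum_const, Finset.card_range]
    push_cast; ring
  have hsub : (∑ l ∈ Finset.Ico m p, ((16*l+4 : ℕ) : ℤ))
      = (∑ l ∈ range p, ((16*l+4 : ℕ) : ℤ)) - (∑ l ∈ range m, ((16*l+4 : ℕ) : ℤ)) := by
    have := Finset.sum_Ico_eq_sub (fun l => ((16*l+4 : ℕ) : ℤ)) hmp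
    simpa using this
  rw [hsub, hlin p, hlin m]
  linear_combination 8*hGpZ - 8*hGmZ + (8*(p:ℤ)+4*(m:ℤ))*hpZ

lemma keyC (hp : p.Prime) (hpm : p = 2*m-1) (hm : 2 ≤ m) :
    (p:ℤ)^3 ∣ ∑ l ∈ Finset.Ico m p,
      (4*(l:ℤ)+1) * (((2*l).choose l : ℕ) : ℤ)^2 * (((p-l : ℕ) : ℤ))^2
        * (((2*(p-l)).choose (p-l) : ℕ) : ℤ)^2 := by
  haveI : Fact p.Prime := ⟨hp⟩
  have hp3 : 3 ≤ p := by omega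
  have hdvd : ∀ l ∈ Finset.Ico m p, ((2*l).choose l) = p * ((2*l).choose l / p) := by
    intro l hl
    rw [Finset.mem_Ico] at hl
    exact (Nat.mul_div_cancel' (L4 hp l (by omega) (by omega))).symm
  set T : ℤ := ∑ l ∈ Finset.Ico m p,
      (4*(l:ℤ)+1) * (((2*l).choose l / p : ℕ) : ℤ)^2 * (((p-l : ℕ) : ℤ))^2
        * (((2*(p-l)).choose (p-l) : ℕ) : ℤ)^2 with hT
  have hfact : ∑ l ∈ Finset.Ico m p,
      (4*(l:ℤ)+1) * (((2*l).choose l : ℕ) : ℤ)^2 * (((p-l : ℕ) : ℤ))^2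
        * (((2*(p-l)).choose (p-l) : ℕ) : ℤ)^2 = (p:ℤ)^2 * T := by
    rw [hT, Finset.mul_sum]
    apply Finset.sum_congr rfl
    intro l hl
    have h2 : (((2*l).choose l : ℕ) : ℤ) = (p:ℤ) * (((2*l).choose l / p : ℕ) : ℤ) := by
      exact_mod_cast congrArg (Nat.cast : ℕ → ℤ) (hdvd l hl)
    rw [h2]; ring
  rw [hfact]
  have hTdvd : (p:ℤ) ∣ T := by
    rw [← ZMod.intCast_zmod_eq_zero_iff_dvd, hT, Int.cast_sum]
    have hterm : ∀ l ∈ Finset.Ico m p,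
        (((4*(l:ℤ)+1) * (((2*l).choose l / p : ℕ) : ℤ)^2 * (((p-l : ℕ) : ℤ))^2
          * (((2*(p-l)).choose (p-l) : ℕ) : ℤ)^2 : ℤ) : ZMod p)
        = ((16*l+4 : ℕ) : ZMod p) := by
      intro l hl
      rw [Finset.mem_Ico] at hl
      have hstar := star hp hpm hm (p-l) (by omega) (by omega)
        (((2*l).choose l / p : ℕ) : ℤ) ?_
      · rw [Int.cast_natCast] at hstar
        simp only [Int.cast_mul, Int.cast_pow, Int.cast_add, Int.cast_one, Int.cast_natCast,
          Int.cast_ofNat]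
        calc (4*((l:ℕ):ZMod p)+1) * (((2*l).choose l / p : ℕ) : ZMod p)^2
              * (((p-l : ℕ)) : ZMod p)^2 * (((2*(p-l)).choose (p-l) : ℕ) : ZMod p)^2
            = (4*((l:ℕ):ZMod p)+1) * ((((p-l:ℕ)) : ZMod p) * (((2*(p-l)).choose (p-l) : ℕ) : ZMod p)
              * (((2*l).choose l / p : ℕ) : ZMod p))^2 := by ring
        _ = (4*((l:ℕ):ZMod p)+1) * (-2:ZMod p)^2 := by rw [hstar]
        _ = ((16*l+4 : ℕ) : ZMod p) := by push_cast; ring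
      · have e : p - (p-l) = l := by omega
        rw [e]
        exact_mod_cast congrArg (Nat.cast : ℕ → ℤ) (hdvd l (by rw [Finset.mem_Ico]; omega))
    rw [Finset.sum_congr rfl hterm]
    have : (∑ l ∈ Finset.Ico m p, ((16*l+4 : ℕ) : ZMod p))
        = ((∑ l ∈ Finset.Ico m p, ((16*l+4 : ℕ) : ℤ) : ℤ) : ZMod p) := by
      rw [Int.cast_sum]
      exact Finset.sum_congr rfl (fun l _ => (Int.cast_natCast _).symm)
    rw [this, gauss_int m p hm (by omega) hpm]
    push_cast
    simp
  obtain ⟨t, ht⟩ := hTdvd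
  exact ⟨t, by rw [ht]; ring⟩

end CC

noncomputable section Main
open Finset

/-- W function -/
def Wf (p j : ℕ) : ℤ := 16^(p-1-j) * (4*(j:ℤ)+1) * (((2*j).choose j : ℕ) : ℤ)^2

/-- inner sum -/
def Af (k : ℕ) : ℤ := ∑ j ∈ range (k+1),
  (((2*j).choose j : ℕ):ℤ)^2 * (((2*(k-j)).choose (k-j) : ℕ):ℤ)^2
    * (4*(j:ℤ)+1) * (4*((k-j : ℕ):ℤ)+1)

variable {p m : ℕ}

lemma P1' (n : ℕ) (hnp : n ≤ p) : 4 * ∑ j ∈ range n, Wf p j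
    = 16^(p-n) * (n:ℤ)^2 * (((2*n).choose n : ℕ) : ℤ)^2 := by
  have hI := congrArg (Nat.cast : ℕ → ℤ) (I1 n)
  push_cast at hI
  have hsplit : ∀ j ∈ range n, (4:ℤ) * Wf p j
      = 16^(p-n) * (4 * ((16:ℤ)^(n-1-j) * (4*(j:ℤ)+1) * (((2*j).choose j : ℕ):ℤ)^2)) := by
    intro j hj
    rw [Finset.mem_range] at hj
    have he : p - 1 - j = (p-n) + (n-1-j) := by omega
    unfold Wf
    rw [he, pow_add]
    try ring
  calc 4 * ∑ j ∈ range n, Wf p j = ∑ j ∈ range n, (4:ℤ) * Wf p j := by rw [Finset.mul_sum]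
  _ = ∑ j ∈ range n, 16^(p-n) * (4 * ((16:ℤ)^(n-1-j) * (4*(j:ℤ)+1) * (((2*j).choose j : ℕ):ℤ)^2)) :=
      Finset.sum_congr rfl hsplit
  _ = 16^(p-n) * (4 * ∑ j ∈ range n, ((16:ℤ)^(n-1-j) * (4*(j:ℤ)+1) * (((2*j).choose j : ℕ):ℤ)^2)) := by
      rw [Finset.mul_sum, Finset.mul_sum]
  _ = 16^(p-n) * (n:ℤ)^2 * (((2*n).choose n : ℕ) : ℤ)^2 := by
      rw [hI]; ring

lemma P2 (a n : ℕ) (ha : a ≤ n) (hnp : n ≤ p) :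
    4 * ∑ j ∈ Finset.Ico a n, Wf p j
    = 16^(p-n) * (n:ℤ)^2 * (((2*n).choose n : ℕ) : ℤ)^2
      - 16^(p-a) * (a:ℤ)^2 * (((2*a).choose a : ℕ) : ℤ)^2 := by
  have h1 := P1' (p := p) a (by omega)
  have h2 := P1' (p := p) n hnp
  have hs : ∑ j ∈ range a, Wf p j + ∑ j ∈ Finset.Ico a n, Wf p j = ∑ j ∈ range n, Wf p j := by
    rw [Finset.range_eq_Ico, Finset.range_eq_Ico]
    exact Finset.sum_Ico_consecutive (fun j => Wf p j) (m := 0) (n := a) (k := n) (by omega) (by omega)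
  linear_combination h2 - h1 + 4 * hs

lemma P3 : 16^(p-1) * (∑ k ∈ range p, 16^(p-1-k) * Af k)
    = ∑ j ∈ range p, ∑ l ∈ range (p-j), Wf p j * Wf p l := by
  have hterm : ∀ k ∈ range p, (16:ℤ)^(p-1) * (16^(p-1-k) * Af k)
      = ∑ j ∈ range (k+1), Wf p j * Wf p (k-j) := by
    intro k hk
    rw [Finset.mem_range] at hk
    unfold Af
    rw [Finset.mul_sum, Finset.mul_sum]
    apply Finset.sum_congr rfl
    intro j hj
    rw [Finset.mem_range] at hj
    unfold Wf
    have he : (p-1-j) + (p-1-(k-j)) = (p-1) + (p-1-k) := by omega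
    have : (16:ℤ)^(p-1-j) * 16^(p-1-(k-j)) = 16^(p-1) * 16^(p-1-k) := by
      rw [← pow_add, ← pow_add, he]
    linear_combination (-(4*(j:ℤ)+1) * (4*((k-j:ℕ):ℤ)+1) * (((2*j).choose j : ℕ):ℤ)^2
      * (((2*(k-j)).choose (k-j) : ℕ):ℤ)^2) * this
  rw [Finset.mul_sum, Finset.sum_congr rfl hterm]
  rw [Finset.sum_sigma' (range p) (fun k => range (k+1)) (fun k j => Wf p j * Wf p (k - j))]
  rw [Finset.sum_sigma' (range p) (fun j => range (p-j)) (fun j l => Wf p j * Wf p l)]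
  apply Finset.sum_nbij' (fun x => (⟨x.2, x.1 - x.2⟩ : Σ _ : ℕ, ℕ))
    (fun x => (⟨x.1 + x.2, x.1⟩ : Σ _ : ℕ, ℕ))
  · intro a ha
    simp only [Finset.mem_sigma, Finset.mem_range] at ha ⊢
    omega
  · intro a ha
    simp only [Finset.mem_sigma, Finset.mem_range] at ha ⊢
    omega
  · intro a ha
    simp only [Finset.mem_sigma, Finset.mem_range] at ha
    obtain ⟨k, j⟩ := a
    simp only at ha ⊢
    ext <;> simp <;> omega
  · intro a ha
    simp only [Finset.mem_sigma, Finset.mem_range] at ha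
    obtain ⟨j, l⟩ := a
    simp only at ha ⊢
    ext <;> simp <;> omega
  · intro a ha
    rfl

end Main

section Assemble
variable {p m : ℕ}

lemma dW (hp : p.Prime) (j : ℕ) (h1 : 2*j ≥ p) (h2 : j < p) : (p:ℤ)^2 ∣ Wf p j := by
  obtain ⟨c, hc⟩ := L4 hp j h1 h2
  have : (((2*j).choose j : ℕ) : ℤ) = (p:ℤ) * c := by exact_mod_cast congrArg (Nat.cast : ℕ → ℤ) hc
  exact ⟨16^(p-1-j) * (4*(j:ℤ)+1) * c^2, by unfold Wf; rw [this]; ring⟩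

lemma Edvd (hp : p.Prime) (hpm : p = 2*m-1) (hm : 2 ≤ m) :
    (p:ℤ)^3 ∣ ∑ k ∈ range p, 16^(p-1-k) * Af k := by
  have hp3 : 3 ≤ p := by omega
  set E : ℤ := ∑ k ∈ range p, 16^(p-1-k) * Af k with hE
  set Ω : ℤ := ∑ j ∈ range p, Wf p j with hΩdef
  have hΩ : 4*Ω = (p:ℤ)^2 * (((2*p).choose p : ℕ) : ℤ)^2 := by
    have := P1' (p := p) p le_rfl
    simpa using this
  -- decompose
  have hinner : ∀ j, j < p → ∑ l ∈ range p, Wf p l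
      = (∑ l ∈ range (p-j), Wf p l) + ∑ l ∈ Finset.Ico (p-j) p, Wf p l := by
    intro j hj
    rw [Finset.range_eq_Ico, Finset.range_eq_Ico]
    exact (Finset.sum_Ico_consecutive (fun l => Wf p l) (m := 0) (n := p-j) (k := p) (by omega) (by omega)).symm
  set R2a : ℤ := ∑ j ∈ Finset.Ico m p, Wf p j * ∑ l ∈ Finset.Ico (p-j) m, Wf p l with hR2a
  set R2b : ℤ := ∑ j ∈ Finset.Ico m p, Wf p j * ∑ l ∈ Finset.Ico m p, Wf p l with hR2b
  set R1 : ℤ := ∑ j ∈ Finset.Ico 0 m, Wf p j * ∑ l ∈ Finset.Ico (p-j) p, Wf p l with hR1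
  have hRdec : Ω * Ω = 16^(p-1) * E + (R1 + (R2a + R2b)) := by
    have h1 : Ω * Ω = ∑ j ∈ range p, Wf p j * ∑ l ∈ range p, Wf p l := by
      rw [hΩdef, Finset.sum_mul]
    have h2 : ∀ j ∈ range p, Wf p j * ∑ l ∈ range p, Wf p l
        = Wf p j * ∑ l ∈ range (p-j), Wf p l + Wf p j * ∑ l ∈ Finset.Ico (p-j) p, Wf p l := by
      intro j hj
      rw [Finset.mem_range] at hj
      rw [hinner j hj]; ring
    rw [h1, Finset.sum_congr rfl h2, Finset.sum_add_distrib]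
    congr 1
    · rw [hE, P3]
      exact Finset.sum_congr rfl (fun j _ => by rw [Finset.mul_sum])
    · -- split outer range at m
      rw [Finset.range_eq_Ico, ← Finset.sum_Ico_consecutive
        (fun j => Wf p j * ∑ l ∈ Finset.Ico (p-j) p, Wf p l) (by omega : 0 ≤ m) (by omega : m ≤ p)]
      congr 1
      rw [hR2a, hR2b, ← Finset.sum_add_distrib]
      apply Finset.sum_congr rfl
      intro j hj
      rw [Finset.mem_Ico] at hj
      have hsp : ∑ l ∈ Finset.Ico (p-j) p, Wf p l
          = ∑ l ∈ Finset.Ico (p-j) m, Wf p l + ∑ l ∈ Finset.Ico m p, Wf p l :=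
        (Finset.sum_Ico_consecutive _ (by omega) (by omega)).symm
      rw [hsp]; ring
  -- R1 = R2a by symmetry
  have hswap : R1 = R2a := by
    rw [hR1, hR2a]
    rw [Finset.sum_congr rfl (fun j _ => by rw [Finset.mul_sum] :
      ∀ j ∈ Finset.Ico 0 m, (Wf p j * ∑ l ∈ Finset.Ico (p-j) p, Wf p l)
        = ∑ l ∈ Finset.Ico (p-j) p, Wf p j * Wf p l)]
    rw [Finset.sum_congr rfl (fun j _ => by rw [Finset.mul_sum] :
      ∀ j ∈ Finset.Ico m p, (Wf p j * ∑ l ∈ Finset.Ico (p-j) m, Wf p l)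
        = ∑ l ∈ Finset.Ico (p-j) m, Wf p j * Wf p l)]
    rw [Finset.sum_sigma' (Finset.Ico 0 m) (fun j => Finset.Ico (p-j) p) (fun j l => Wf p j * Wf p l)]
    rw [Finset.sum_sigma' (Finset.Ico m p) (fun j => Finset.Ico (p-j) m) (fun j l => Wf p j * Wf p l)]
    apply Finset.sum_nbij' (fun x => (⟨x.2, x.1⟩ : Σ _ : ℕ, ℕ))
      (fun x => (⟨x.2, x.1⟩ : Σ _ : ℕ, ℕ))
    · intro a ha
      simp only [Finset.mem_sigma, Finset.mem_Ico] at ha ⊢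
      omega
    · intro a ha
      simp only [Finset.mem_sigma, Finset.mem_Ico] at ha ⊢
      omega
    · intro a _; rfl
    · intro a _; rfl
    · intro a ha
      exact mul_comm _ _
  -- divisibility of pieces
  have hdsum : (p:ℤ)^2 ∣ ∑ j ∈ Finset.Ico m p, Wf p j := by
    apply Finset.dvd_sum
    intro j hj
    rw [Finset.mem_Ico] at hj
    exact dW hp j (by omega) (by omega)
  have hdR2b : (p:ℤ)^3 ∣ R2b := by
    rw [hR2b, ← Finset.sum_mul]
    obtain ⟨c, hc⟩ := hdsum
    exact ⟨(p:ℤ) * c * c, by rw [hc]; ring⟩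
  have hdR2a : (p:ℤ)^3 ∣ 4 * R2a := by
    have h4 : 4 * R2a = (∑ j ∈ Finset.Ico m p, Wf p j) * (16^(p-m) * (m:ℤ)^2 * (((2*m).choose m : ℕ) : ℤ)^2)
        - 16^(p-1) * ∑ l ∈ Finset.Ico m p,
          (4*(l:ℤ)+1) * (((2*l).choose l : ℕ) : ℤ)^2 * (((p-l : ℕ) : ℤ))^2
            * (((2*(p-l)).choose (p-l) : ℕ) : ℤ)^2 := by
      rw [hR2a, Finset.mul_sum, Finset.sum_mul, Finset.mul_sum, ← Finset.sum_sub_distrib]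
      apply Finset.sum_congr rfl
      intro j hj
      rw [Finset.mem_Ico] at hj
      have hP2 := P2 (p := p) (p-j) m (by omega) (by omega)
      have hexp : (16:ℤ)^(p-(p-j)) = 16^j := by congr 1; omega
      have hjj : p - (p - j) = j := by omega
      have hWj : Wf p j * 16^j = 16^(p-1) * ((4*(j:ℤ)+1) * (((2*j).choose j : ℕ) : ℤ)^2) := by
        have h16 : (16:ℤ)^(p-1-j) * 16^j = 16^(p-1) := by
          rw [← pow_add]; congr 1; omega
        unfold Wf
        linear_combination ((4*(j:ℤ)+1) * (((2*j).choose j : ℕ) : ℤ)^2) * h16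
      calc 4 * (Wf p j * ∑ l ∈ Finset.Ico (p-j) m, Wf p l)
          = Wf p j * (4 * ∑ l ∈ Finset.Ico (p-j) m, Wf p l) := by ring
      _ = Wf p j * (16^(p-m) * (m:ℤ)^2 * (((2*m).choose m : ℕ) : ℤ)^2)
            - Wf p j * (16^(p-(p-j)) * ((p-j:ℕ):ℤ)^2 * (((2*(p-j)).choose (p-j) : ℕ) : ℤ)^2) := by
            rw [hP2]; ring
      _ = Wf p j * (16^(p-m) * (m:ℤ)^2 * (((2*m).choose m : ℕ) : ℤ)^2)
            - 16^(p-1) * ((4*(j:ℤ)+1) * (((2*j).choose j : ℕ) : ℤ)^2 * ((p-j:ℕ):ℤ)^2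
              * (((2*(p-j)).choose (p-j) : ℕ) : ℤ)^2) := by
            rw [hexp]
            linear_combination (-((p-j:ℕ):ℤ)^2 * (((2*(p-j)).choose (p-j) : ℕ) : ℤ)^2) * hWj
      _ = _ := by ring
    rw [h4]
    apply dvd_sub
    · obtain ⟨c, hc⟩ := hdsum
      obtain ⟨d, hd⟩ := L4 hp m (by omega) (by omega)
      have hdZ : (((2*m).choose m : ℕ) : ℤ) = (p:ℤ) * d := by
        exact_mod_cast congrArg (Nat.cast : ℕ → ℤ) hd
      exact ⟨(p:ℤ) * c * 16^(p-m) * (m:ℤ)^2 * d^2, by rw [hc, hdZ]; ring⟩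
    · obtain ⟨c2, hc2⟩ := keyC hp hpm hm
      exact ⟨16^(p-1) * c2, by rw [hc2]; ring⟩
  -- assemble
  set bp : ℤ := (((2*p).choose p : ℕ) : ℤ) with hbp
  have hsq : 16*(Ω*Ω) = ((p:ℤ)^2*bp^2)^2 := by
    linear_combination (4*Ω + (p:ℤ)^2*bp^2) * hΩ
  have h16p : (16:ℤ)^p = 16 * 16^(p-1) := by
    rw [← pow_succ']; congr 1; omega
  have hfin : 16^p * E = ((p:ℤ)^2*bp^2)^2 - 8*(4*R2a) - 16*R2b := by
    rw [h16p]
    linear_combination (-16 : ℤ)*hRdec + hsq + (-16 : ℤ)*hswap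
  have hdvd16 : (p:ℤ)^3 ∣ 16^p * E := by
    rw [hfin]
    apply dvd_sub
    · apply dvd_sub
      · exact ⟨(p:ℤ) * bp^4, by ring⟩
      · exact Dvd.dvd.mul_left hdR2a 8
    · exact Dvd.dvd.mul_left hdR2b 16
  have hpc : Nat.Coprime p 16 := by
    rw [Nat.Prime.coprime_iff_not_dvd hp]
    intro h
    have h2 : p ∣ 2 := hp.dvd_of_dvd_pow (show p ∣ 2^4 by norm_num at h ⊢; exact h)
    have := Nat.le_of_dvd (by norm_num) h2
    omega
  have hco : IsCoprime ((p:ℤ)^3) ((16:ℤ)^p) := by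
    have h := Nat.isCoprime_iff_coprime.mpr (hpc.pow 3 p)
    push_cast at h
    exact h
  exact hco.dvd_of_dvd_mul_left hdvd16

end Assemble

theorem stmt6 (p : ℕ) (hp : p.Prime) (hodd : Odd p) :
    (∑ k ∈ range p, ((1 : ℚ) / 16 ^ k) *
        ∑ j ∈ range (k + 1),
          ((2 * j).choose j : ℚ) ^ 2 * ((2 * (k - j)).choose (k - j) : ℚ) ^ 2 *
            (4 * j + 1) * (4 * (k - j) + 1)) = 0 ∨
      3 ≤ padicValRat p
        (∑ k ∈ range p, ((1 : ℚ) / 16 ^ k) *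
            ∑ j ∈ range (k + 1),
              ((2 * j).choose j : ℚ) ^ 2 * ((2 * (k - j)).choose (k - j) : ℚ) ^ 2 *
                (4 * j + 1) * (4 * (k - j) + 1)) := by
  haveI : Fact p.Prime := ⟨hp⟩
  set S : ℚ := ∑ k ∈ range p, ((1 : ℚ) / 16 ^ k) *
      ∑ j ∈ range (k + 1),
        ((2 * j).choose j : ℚ) ^ 2 * ((2 * (k - j)).choose (k - j) : ℚ) ^ 2 *
          (4 * j + 1) * (4 * (k - j) + 1) with hSdef
  by_cases hS : S = 0
  · exact Or.inl hS
  right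
  obtain ⟨t, ht⟩ := hodd
  have hp2 : 2 ≤ p := hp.two_le
  have hpne2 : p ≠ 2 := by rintro rfl; omega
  have hp3 : 3 ≤ p := by omega
  set m : ℕ := t + 1 with hmdef
  have hpm : p = 2*m - 1 := by omega
  have hm : 2 ≤ m := by omega
  set E : ℤ := ∑ k ∈ range p, 16^(p-1-k) * Af k with hE
  have hE3 : (p:ℤ)^3 ∣ E := Edvd hp hpm hm
  -- S = E / 16^(p-1)
  have h16ne : ((16:ℚ)^(p-1)) ≠ 0 := by positivity
  have hAf : ∀ k : ℕ, ((Af k : ℤ) : ℚ) = ∑ j ∈ range (k + 1),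
      ((2 * j).choose j : ℚ) ^ 2 * ((2 * (k - j)).choose (k - j) : ℚ) ^ 2 *
        (4 * j + 1) * (4 * (k - j) + 1) := by
    intro k
    unfold Af
    push_cast
    apply Finset.sum_congr rfl
    intro j hj
    rw [Finset.mem_range] at hj
    have hc : ((k - j : ℕ) : ℚ) = (k:ℚ) - j := by
      rw [Nat.cast_sub (by omega : j ≤ k)]
    rw [hc]
  have hSE : S = (E : ℚ) / 16^(p-1) := by
    rw [eq_div_iff h16ne, hE]
    push_cast
    rw [hSdef, Finset.sum_mul]
    apply Finset.sum_congr rfl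
    intro k hk
    rw [Finset.mem_range] at hk
    rw [← hAf k]
    have hpow : (16:ℚ)^(p-1-k) * 16^k = 16^(p-1) := by
      rw [← pow_add]; congr 1; omega
    have h1 : (16:ℚ)^(p-1-k) = 16^(p-1) / 16^k := by
      rw [eq_div_iff (by positivity : (16:ℚ)^k ≠ 0)]; exact hpow
    rw [h1]
    ring
  have hEne : (E : ℚ) ≠ 0 := by
    intro h0
    apply hS
    rw [hSE, h0, zero_div]
  have hEne' : E ≠ 0 := by exact_mod_cast hEne
  have hval16 : padicValRat p ((16:ℚ)^(p-1)) = 0 := by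
    rw [padicValRat.pow (16:ℚ)]
    have : padicValRat p (16:ℚ) = 0 := by
      have h16 : (16:ℚ) = ((16:ℤ) : ℚ) := by norm_cast
      rw [h16, padicValRat.of_int]
      have : padicValInt p 16 = 0 := by
        apply padicValInt.eq_zero_of_not_dvd
        intro hdvd
        have : p ∣ 16 := by exact_mod_cast hdvd
        have h2 : p ∣ 2 := hp.dvd_of_dvd_pow (show p ∣ 2^4 by norm_num; exact this)
        have := Nat.le_of_dvd (by norm_num) h2
        omega
      rw [this]
      simp
    rw [this, mul_zero]
  have hvalE : 3 ≤ padicValInt p E := by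
    have := (padicValInt_dvd_iff (p := p) 3 E).mp hE3
    tauto
  rw [hSE, padicValRat.div hEne h16ne, hval16, sub_zero]
  have : padicValRat p ((E:ℤ):ℚ) = padicValInt p E := padicValRat.of_int
  rw [this]
  exact_mod_cast hvalE
end

section
/- For any odd prime p, ∑_{k=0}^{(p-1)/2} C(2k,k)/4^k ≡ 0 (mod p). -/
open Finset

lemma sum_centralBinom_div (n : ℕ) :
    (∑ k ∈ range (n + 1), ((2 * k).choose k : ℚ) / 4 ^ k)
      = (2 * n + 1) * ((2 * n).choose n : ℚ) / 4 ^ n := by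
  induction n with
  | zero => simp
  | succ n ih =>
    rw [Finset.sum_range_succ, ih]
    have key := Nat.succ_mul_centralBinom_succ n
    simp only [Nat.centralBinom] at key
    have keyQ : ((n : ℚ) + 1) * ((2 * (n + 1)).choose (n + 1) : ℚ)
        = 2 * (2 * n + 1) * ((2 * n).choose n : ℚ) := by
      exact_mod_cast key
    have hn1 : ((n : ℚ) + 1) ≠ 0 := by positivity
    have h4 : (4 : ℚ) ^ n ≠ 0 := by positivity
    set a := ((2 * n).choose n : ℚ) with ha
    set b := ((2 * (n + 1)).choose (n + 1) : ℚ) with hb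
    rw [pow_succ]
    push_cast
    linear_combination (-1 / (2 * (4:ℚ) ^ n)) * keyQ

theorem stmt9 (p : ℕ) (hp : p.Prime) (hodd : Odd p) :
    (∑ k ∈ range ((p - 1) / 2 + 1), ((2 * k).choose k : ℚ) / 4 ^ k) = 0 ∨
      1 ≤ padicValRat p (∑ k ∈ range ((p - 1) / 2 + 1), ((2 * k).choose k : ℚ) / 4 ^ k) := by
  right
  haveI : Fact p.Prime := ⟨hp⟩
  obtain ⟨m, hm⟩ := hodd
  have hm2 : (p - 1) / 2 = m := by omega
  rw [hm2, sum_centralBinom_div]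
  have hp2 : p ≠ 2 := by omega
  have hpc : (2 * (m : ℚ) + 1) = (p : ℚ) := by rw [hm]; push_cast; ring
  rw [hpc]
  have hc : (0 : ℕ) < (2 * m).choose m :=
    Nat.choose_pos (by omega)
  have hcQ : ((2 * m).choose m : ℚ) ≠ 0 := by exact_mod_cast hc.ne'
  have hpQ : (p : ℚ) ≠ 0 := by exact_mod_cast hp.ne_zero
  have h4 : (4 : ℚ) ^ m ≠ 0 := by positivity
  rw [padicValRat.div (by exact mul_ne_zero hpQ hcQ) h4,
    padicValRat.mul hpQ hcQ]
  have hvp : padicValRat p p = 1 := padicValRat.self hp.one_lt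
  have hvc : 0 ≤ padicValRat p ((2 * m).choose m : ℚ) := by
    rw [padicValRat.of_nat]
    positivity
  have hv4 : padicValRat p ((4 : ℚ) ^ m) = 0 := by
    have : ((4 : ℚ) ^ m) = ((4 ^ m : ℕ) : ℚ) := by push_cast; ring
    rw [this, padicValRat.of_nat]
    have : padicValNat p (4 ^ m) = 0 := by
      apply padicValNat.eq_zero_of_not_dvd
      intro hdvd
      have h2 : p ∣ 2 := hp.dvd_of_dvd_pow
        (by rwa [show (4:ℕ) = 2 ^ 2 from rfl, ← pow_mul] at hdvd)
      have := Nat.le_of_dvd (by norm_num) h2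
      have := hp.two_le
      omega
    simp [this]
  rw [hvp, hv4]
  linarith
end

section
/- For any prime p with p ≡ 1 (mod 4), ∑_{k=0}^{p-1} ∑_{j=0}^{k} (8j+1)(8k-8j+1) · ((1/4)_j² (1/4)_{k-j}²)/(j!² (k-j)!²) ≡ p² · (∑_{k=0}^{(p-1)/4} (1/4)_k / k!)² (mod p²), where (a)_k denotes the Pochhammer symbol. -/
open Finset

namespace Stmt11Aux

/-- The product `∏_{i<j} (4i+1)`. -/
def Aa (j : ℕ) : ℕ := ∏ i ∈ range j, (4*i+1)

/-- scaled summand -/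
def ee (p j : ℕ) : ℤ :=
  ((8*j+1 : ℕ) : ℤ) * (Aa j : ℤ)^2 * 16^(p-1-j) * (((j+1).ascFactorial (p-1-j) : ℕ) : ℤ)^2

lemma asc_eval_prod (x : ℚ) (n : ℕ) :
    (ascPochhammer ℚ n).eval x = ∏ i ∈ range n, (x + i) := by
  induction n with
  | zero => simp
  | succ n ih => rw [ascPochhammer_succ_eval, prod_range_succ, ih]

lemma hP (j : ℕ) : (ascPochhammer ℚ j).eval ((1:ℚ)/4) = (Aa j : ℚ) / 4^j := by
  rw [asc_eval_prod]
  have h1 : ∀ i ∈ range j, ((1:ℚ)/4 + (i:ℕ)) = ((4*i+1 : ℕ) : ℚ)/4 := by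
    intro i _; push_cast; ring
  rw [prod_congr rfl h1, prod_div_distrib, prod_const, card_range, Aa]
  push_cast
  ring

lemma key_binom (q : ℕ) :
    ∑ j ∈ range (q+1), (8*j+1) * (q.choose j)^2 = (4*q+1) * ((2*q).choose q) := by
  have hvdm : ∑ j ∈ range (q+1), (q.choose j)^2 = (2*q).choose q := by
    rw [two_mul, Nat.add_choose_eq, Finset.Nat.sum_antidiagonal_eq_sum_range_succ_mk]
    refine sum_congr rfl fun j hj => ?_
    have hj' : j ≤ q := by simpa [Nat.lt_succ_iff] using hj
    rw [Nat.choose_symm hj', pow_two]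
  have hrefl : ∑ j ∈ range (q+1), (8*(q-j)+1) * (q.choose (q-j))^2
      = ∑ j ∈ range (q+1), (8*j+1) * (q.choose j)^2 := by
    have := Finset.sum_range_reflect (fun j => (8*j+1) * (q.choose j)^2) (q+1)
    simpa using this
  have h2 : 2 * (∑ j ∈ range (q+1), (8*j+1) * (q.choose j)^2)
      = 2 * ((4*q+1) * ((2*q).choose q)) := by
    rw [two_mul]
    nth_rewrite 1 [← hrefl]
    rw [← sum_add_distrib]
    have : ∀ j ∈ range (q+1),
        (8*(q-j)+1) * (q.choose (q-j))^2 + (8*j+1) * (q.choose j)^2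
          = (8*q+2) * (q.choose j)^2 := by
      intro j hj
      have hj' : j ≤ q := by simpa [Nat.lt_succ_iff] using hj
      rw [Nat.choose_symm hj', ← add_mul]
      congr 1
      omega
    rw [sum_congr rfl this, ← mul_sum, hvdm]
    ring
  omega

lemma tri {M : Type*} [AddCommMonoid M] (F : ℕ → ℕ → M) (n : ℕ) :
    ∑ k ∈ range n, ∑ j ∈ range (k+1), F j (k - j)
      = ∑ i ∈ range n, ∑ j ∈ range (n - i), F i j := by
  induction n with
  | zero => simp
  | succ n ih =>
    rw [sum_range_succ, ih]
    have h1 : ∑ i ∈ range (n+1), ∑ j ∈ range (n+1-i), F i j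
        = ∑ i ∈ range (n+1), ((∑ j ∈ range (n-i), F i j) + F i (n-i)) := by
      refine sum_congr rfl fun i hi => ?_
      have hi' : i < n + 1 := mem_range.mp hi
      have : n + 1 - i = (n - i) + 1 := by omega
      rw [this, sum_range_succ]
    rw [h1, sum_add_distrib, sum_range_succ (f := fun i => ∑ j ∈ range (n - i), F i j)]
    simp only [Nat.sub_self, range_zero, sum_empty, add_zero]

lemma hdG {p q j : ℕ} (hq : p = 4*q+1) (hj : j ≤ q) :
    q.descFactorial j * ((j+1).ascFactorial (p-1-j)) = q.choose j * (p-1).factorial := by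
  have h1 : q.descFactorial j = q.choose j * j.factorial := by
    have h2 := Nat.choose_mul_factorial_mul_factorial hj
    have h3 := Nat.factorial_mul_descFactorial hj
    refine Nat.eq_of_mul_eq_mul_left (Nat.factorial_pos (q - j)) ?_
    rw [h3, ← h2]; ring
  have h4 := Nat.factorial_mul_ascFactorial j (p-1-j)
  rw [show j + (p-1-j) = p-1 by omega] at h4
  rw [h1, mul_assoc, h4]


lemma hAZ {p q : ℕ} (hq : p = 4*q+1) {j : ℕ} (hj : j ≤ q) :
    ((Aa j : ℕ) : ZMod p) = (-4)^j * ((q.descFactorial j : ℕ) : ZMod p) := by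
  have h0 : ((4*q+1 : ℕ) : ZMod p) = 0 := by rw [← hq]; exact ZMod.natCast_self p
  push_cast at h0
  rw [Aa, Nat.descFactorial_eq_prod_range]
  push_cast
  rw [show ((-4 : ZMod p))^j = ∏ _i ∈ range j, (-4 : ZMod p) by rw [prod_const, card_range]]
  rw [← prod_mul_distrib]
  refine prod_congr rfl fun i hi => ?_
  have hi' : i < j := mem_range.mp hi
  rw [Nat.cast_sub (by omega : i ≤ q)]
  push_cast
  linear_combination h0

lemma hEZ {p q : ℕ} (hq : p = 4*q+1) {j : ℕ} (hj : j ≤ q) :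
    ((ee p j : ℤ) : ZMod p)
      = (16^(p-1) * (((p-1).factorial : ℕ) : ZMod p)^2)
        * (((8*j+1) * (q.choose j)^2 : ℕ) : ZMod p) := by
  have hjp : j ≤ p - 1 := by omega
  have h1 : ((q.descFactorial j : ℕ) : ZMod p) * (((j+1).ascFactorial (p-1-j) : ℕ) : ZMod p)
      = ((q.choose j : ℕ) : ZMod p) * (((p-1).factorial : ℕ) : ZMod p) := by
    exact_mod_cast congrArg (Nat.cast : ℕ → ZMod p) (hdG hq hj)
  have h2 : (((-4 : ZMod p))^j)^2 = 16^j := by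
    rw [← pow_mul, mul_comm j 2, pow_mul]; norm_num
  have h3 : (16 : ZMod p)^j * 16^(p-1-j) = 16^(p-1) := by
    rw [← pow_add]; congr 1; omega
  rw [ee]
  push_cast
  rw [hAZ hq hj]
  set d : ZMod p := ((q.descFactorial j : ℕ) : ZMod p)
  set g : ZMod p := (((j+1).ascFactorial (p-1-j) : ℕ) : ZMod p)
  set c : ZMod p := ((q.choose j : ℕ) : ZMod p)
  set f : ZMod p := (((p-1).factorial : ℕ) : ZMod p)
  linear_combination ((8*(j:ZMod p)+1) * 16^(p-1-j) * d^2 * g^2) * h2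
    + ((8*(j:ZMod p)+1) * d^2 * g^2) * h3
    + ((8*(j:ZMod p)+1) * 16^(p-1) * (d*g + c*f)) * h1

lemma hB {p q : ℕ} (hq : p = 4*q+1) :
    (p : ℤ) ∣ ∑ j ∈ range (q+1), ee p j := by
  rw [← ZMod.intCast_zmod_eq_zero_iff_dvd]
  push_cast
  rw [sum_congr rfl (fun j hj => hEZ hq (by simpa [Nat.lt_succ_iff] using hj))]
  rw [← mul_sum, ← Nat.cast_sum, key_binom q, ← hq]
  simp


lemma hterm {p j : ℕ} (hj : j < p) :
    ((ee p j : ℤ) : ℚ)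
      = (16^(p-1) * (((p-1).factorial : ℕ) : ℚ)^2)
        * ((8*(j:ℚ)+1) * ((ascPochhammer ℚ j).eval ((1:ℚ)/4))^2 / ((j.factorial : ℚ))^2) := by
  have h16 : (16:ℚ)^(p-1) = 16^j * 16^(p-1-j) := by rw [← pow_add]; congr 1; omega
  have h16j : (16:ℚ)^j = ((4:ℚ)^j)^2 := by
    rw [← pow_mul, mul_comm j 2, pow_mul]; norm_num
  have hf : ((p-1).factorial : ℚ) = (j.factorial : ℚ) * (((j+1).ascFactorial (p-1-j) : ℕ) : ℚ) := by
    have h4 := Nat.factorial_mul_ascFactorial j (p-1-j)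
    rw [show j + (p-1-j) = p-1 by omega] at h4
    exact_mod_cast h4.symm
  rw [ee, hP]
  push_cast
  rw [h16, h16j, hf]
  have hj4 : (4:ℚ)^j ≠ 0 := by positivity
  have hjf : (j.factorial : ℚ) ≠ 0 := by positivity
  field_simp

lemma hterm2 {p j j' : ℕ} (hj : j < p) (hj' : j' < p) :
    (8*(j:ℚ)+1) * (8*(j':ℚ)+1) *
        (((ascPochhammer ℚ j).eval ((1:ℚ)/4))^2 * ((ascPochhammer ℚ j').eval ((1:ℚ)/4))^2) /
        ((j.factorial : ℚ)^2 * ((j'.factorial : ℚ))^2)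
      = ((ee p j * ee p j' : ℤ) : ℚ)
        / (16^(p-1) * (((p-1).factorial : ℕ) : ℚ)^2)^2 := by
  rw [Int.cast_mul, hterm hj, hterm hj']
  have h1 : (16:ℚ)^(p-1) ≠ 0 := by positivity
  have h2 : (((p-1).factorial : ℕ) : ℚ) ≠ 0 := by positivity
  have h3 : (j.factorial : ℚ) ≠ 0 := by positivity
  have h4 : ((j'.factorial : ℕ) : ℚ) ≠ 0 := by positivity
  field_simp

lemma hSlem (p : ℕ) (hp : 1 ≤ p) :
    (∑ k ∈ range p, ∑ j ∈ range (k+1),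
        (8*(j:ℚ)+1) * (8*((k:ℚ)-(j:ℚ))+1) *
          (((ascPochhammer ℚ j).eval ((1:ℚ)/4))^2 *
            ((ascPochhammer ℚ (k-j)).eval ((1:ℚ)/4))^2) /
          ((j.factorial : ℚ)^2 * (((k-j).factorial : ℚ))^2))
      = ((∑ k ∈ range p, ∑ j ∈ range (k+1), ee p j * ee p (k-j) : ℤ) : ℚ)
        / (16^(p-1) * (((p-1).factorial : ℕ) : ℚ)^2)^2 := by
  rw [Int.cast_sum, sum_div]
  refine sum_congr rfl fun k hk => ?_
  rw [Int.cast_sum, sum_div]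
  refine sum_congr rfl fun j hj => ?_
  have hk' : k < p := mem_range.mp hk
  have hj' : j ≤ k := by simpa [Nat.lt_succ_iff] using hj
  have hcast : (k:ℚ) - (j:ℚ) = ((k - j : ℕ) : ℚ) := by
    rw [Nat.cast_sub hj']
  rw [hcast]
  exact hterm2 (by omega) (by omega)

lemma hTlem (q : ℕ) :
    (∑ k ∈ range (q+1), (ascPochhammer ℚ k).eval ((1:ℚ)/4) / (k.factorial : ℚ))
      = ((∑ k ∈ range (q+1),
            (Aa k : ℤ) * 4^(q-k) * (((k+1).ascFactorial (q-k) : ℕ) : ℤ) : ℤ) : ℚ)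
        / ((4^q * q.factorial : ℕ) : ℚ) := by
  rw [Int.cast_sum, sum_div]
  refine sum_congr rfl fun k hk => ?_
  have hk' : k ≤ q := by simpa [Nat.lt_succ_iff] using hk
  have h4 : (4:ℚ)^q = 4^k * 4^(q-k) := by rw [← pow_add]; congr 1; omega
  have hf : (q.factorial : ℚ) = (k.factorial : ℚ) * (((k+1).ascFactorial (q-k) : ℕ) : ℚ) := by
    have h5 := Nat.factorial_mul_ascFactorial k (q-k)
    rw [show k + (q-k) = q by omega] at h5
    exact_mod_cast h5.symm
  rw [hP]
  push_cast
  rw [h4, hf]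
  have h6 : (4:ℚ)^k ≠ 0 := by positivity
  have h7 : (k.factorial : ℚ) ≠ 0 := by positivity
  field_simp

end Stmt11Aux

open Stmt11Aux


theorem stmt11 (p : ℕ) (hp : p.Prime) (hmod : p % 4 = 1) :
    (∑ k ∈ range p,
        ∑ j ∈ range (k + 1),
          (8 * j + 1 : ℚ) * (8 * (k - j) + 1) *
            (((ascPochhammer ℚ j).eval ((1 : ℚ) / 4)) ^ 2 *
              ((ascPochhammer ℚ (k - j)).eval ((1 : ℚ) / 4)) ^ 2) /
            ((j.factorial : ℚ) ^ 2 * ((k - j).factorial : ℚ) ^ 2)) -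
      (p : ℚ) ^ 2 *
        (∑ k ∈ range ((p - 1) / 4 + 1),
            (ascPochhammer ℚ k).eval ((1 : ℚ) / 4) / (k.factorial : ℚ)) ^ 2 = 0 ∨
      2 ≤ padicValRat p
        ((∑ k ∈ range p,
            ∑ j ∈ range (k + 1),
              (8 * j + 1 : ℚ) * (8 * (k - j) + 1) *
                (((ascPochhammer ℚ j).eval ((1 : ℚ) / 4)) ^ 2 *
                  ((ascPochhammer ℚ (k - j)).eval ((1 : ℚ) / 4)) ^ 2) /
                ((j.factorial : ℚ) ^ 2 * ((k - j).factorial : ℚ) ^ 2)) -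
          (p : ℚ) ^ 2 *
            (∑ k ∈ range ((p - 1) / 4 + 1),
                (ascPochhammer ℚ k).eval ((1 : ℚ) / 4) / (k.factorial : ℚ)) ^ 2) := by
  haveI : Fact p.Prime := ⟨hp⟩
  have hp2 := hp.two_le
  obtain ⟨q, hq⟩ : ∃ q, p = 4 * q + 1 := ⟨p / 4, by omega⟩
  have hp1 : p ≠ 1 := hp.one_lt.ne'
  have hq1 : 1 ≤ q := by omega
  have h14 : (p - 1) / 4 = q := by omega
  rw [h14, hSlem p (by omega), hTlem q]
  -- abbreviations
  set SZ : ℤ := ∑ k ∈ range p, ∑ j ∈ range (k+1), ee p j * ee p (k-j) with hSZ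
  set tZ : ℤ := ∑ k ∈ range (q+1),
      (Aa k : ℤ) * 4^(q-k) * (((k+1).ascFactorial (q-k) : ℕ) : ℤ) with htZ
  set N : ℤ := SZ * ((4^q * q.factorial : ℕ) : ℤ)^2
      - (p:ℤ)^2 * tZ^2 * ((16^(p-1) * ((p-1).factorial : ℕ)^2 : ℕ) : ℤ)^2 with hN
  set dN : ℕ := (16^(p-1) * ((p-1).factorial)^2)^2 * (4^q * q.factorial)^2 with hdN
  have hfq : (0:ℚ) < (q.factorial : ℚ) := by exact_mod_cast q.factorial_pos
  have hfp : (0:ℚ) < (((p-1).factorial : ℕ) : ℚ) := by exact_mod_cast (p-1).factorial_pos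
  have hE : ((SZ : ℤ) : ℚ) / (16^(p-1) * (((p-1).factorial : ℕ) : ℚ)^2)^2
        - (p:ℚ)^2 * (((tZ : ℤ) : ℚ) / ((4^q * q.factorial : ℕ) : ℚ))^2
      = ((N : ℤ) : ℚ) / ((dN : ℕ) : ℚ) := by
    rw [hN, hdN]
    push_cast
    have h1 : (16:ℚ)^(p-1) ≠ 0 := by positivity
    have h2 : (((p-1).factorial : ℕ) : ℚ) ≠ 0 := ne_of_gt hfp
    have h3 : (4:ℚ)^q ≠ 0 := by positivity
    have h4 : (q.factorial : ℚ) ≠ 0 := ne_of_gt hfq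
    field_simp
  rw [hE]
  -- divisibility of N by p^2
  have hpe : ∀ j, q < j → (p:ℤ)^2 ∣ ee p j := by
    intro j hj
    have h1 : p ∣ Aa j := by
      have h2 : (4*q+1) ∣ Aa j := dvd_prod_of_mem (fun i => 4*i+1) (mem_range.mpr hj)
      rwa [← hq] at h2
    have h3 : (p:ℤ)^2 ∣ (Aa j : ℤ)^2 := pow_dvd_pow_of_dvd (Int.natCast_dvd_natCast.mpr h1) 2
    rw [ee]
    exact ((h3.mul_left _).mul_right _).mul_right _
  set hh : ℕ → ℤ := fun j => if j ≤ q then ee p j else 0 with hhh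
  have hhsq : ∑ k ∈ range p, ∑ j ∈ range (k+1), hh j * hh (k-j)
      = (∑ j ∈ range p, hh j)^2 := by
    rw [tri (fun a b => hh a * hh b) p, sq, sum_mul_sum]
    refine sum_congr rfl fun i hi => ?_
    have hi' : i < p := mem_range.mp hi
    refine sum_subset (range_subset_range.mpr (by omega)) fun j hj hj' => ?_
    have hj1 : j < p := mem_range.mp hj
    have hj2 : p - i ≤ j := by simpa using hj'
    by_cases hiq : i ≤ q
    · have hjq : ¬ j ≤ q := by omega
      simp only [hhh]
      rw [if_neg hjq, mul_zero]
    · simp only [hhh]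
      rw [if_neg hiq, zero_mul]
  have hdiff : (p:ℤ)^2 ∣ SZ - ∑ k ∈ range p, ∑ j ∈ range (k+1), hh j * hh (k-j) := by
    rw [hSZ, ← sum_sub_distrib]
    refine dvd_sum fun k hk => ?_
    rw [← sum_sub_distrib]
    refine dvd_sum fun j hj => ?_
    have hk' : k < p := mem_range.mp hk
    have hj' : j ≤ k := by simpa [Nat.lt_succ_iff] using hj
    by_cases h1 : j ≤ q
    · by_cases h2 : k - j ≤ q
      · simp only [hhh]
        rw [if_pos h1, if_pos h2, sub_self]
        exact dvd_zero _
      · simp only [hhh]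
        rw [if_pos h1, if_neg h2, mul_zero, sub_zero]
        exact (hpe (k-j) (by omega)).mul_left _
    · simp only [hhh]
      rw [if_neg h1, zero_mul, sub_zero]
      exact (hpe j (by omega)).mul_right _
  have hBp : (p:ℤ) ∣ ∑ j ∈ range p, hh j := by
    have e1 : ∑ j ∈ range p, hh j = ∑ j ∈ range (q+1), ee p j := by
      rw [← sum_subset (range_subset_range.mpr (by omega : q+1 ≤ p)) (fun j hj hj' => ?_)]
      · refine sum_congr rfl fun j hj => ?_
        have : j ≤ q := by simpa [Nat.lt_succ_iff] using hj
        simp only [hhh]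
        rw [if_pos this]
      · have : ¬ j ≤ q := by
          simp only [mem_range, Nat.lt_succ_iff] at hj'
          omega
        simp only [hhh]
        rw [if_neg this]
    rw [e1]
    exact hB hq
  have hSZdvd : (p:ℤ)^2 ∣ SZ := by
    have h2 : (p:ℤ)^2 ∣ (∑ j ∈ range p, hh j)^2 := pow_dvd_pow_of_dvd hBp 2
    have h3 := dvd_add hdiff (hhsq ▸ h2)
    simpa using h3
  have hNdvd : (p:ℤ)^2 ∣ N := by
    rw [hN]
    exact dvd_sub (hSZdvd.mul_right _) ((dvd_mul_right _ _).mul_right _)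
  -- p does not divide dN
  have hpne2 : p ≠ 2 := by omega
  have hp2' : ¬ p ∣ 2 := fun h => hpne2 ((Nat.prime_dvd_prime_iff_eq hp Nat.prime_two).mp h)
  have hpdN : ¬ p ∣ dN := by
    rw [hdN]
    intro h
    rcases (Nat.Prime.dvd_mul hp).mp h with h' | h'
    · have h'' := hp.dvd_of_dvd_pow h'
      rcases (Nat.Prime.dvd_mul hp).mp h'' with h3 | h3
      · have : p ∣ 2 := by
          have : (16:ℕ)^(p-1) = 2^(4*(p-1)) := by
            rw [show (16:ℕ) = 2^4 by norm_num, ← pow_mul]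
          rw [this] at h3
          exact hp.dvd_of_dvd_pow h3
        exact hp2' this
      · have h4 := hp.dvd_of_dvd_pow h3
        have := (Nat.Prime.dvd_factorial hp).mp h4
        omega
    · have h'' := hp.dvd_of_dvd_pow h'
      rcases (Nat.Prime.dvd_mul hp).mp h'' with h3 | h3
      · have : p ∣ 2 := by
          have : (4:ℕ)^q = 2^(2*q) := by
            rw [show (4:ℕ) = 2^2 by norm_num, ← pow_mul]
          rw [this] at h3
          exact hp.dvd_of_dvd_pow h3
        exact hp2' this
      · have := (Nat.Prime.dvd_factorial hp).mp h3
        omega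
  have hdN0 : dN ≠ 0 := by
    rw [hdN]
    positivity
  rcases eq_or_ne N 0 with h0 | h0
  · left
    rw [h0]
    simp
  · right
    have hdNQ : ((dN : ℕ) : ℚ) ≠ 0 := Nat.cast_ne_zero.mpr hdN0
    have hNQ : ((N : ℤ) : ℚ) ≠ 0 := Int.cast_ne_zero.mpr h0
    have v3 : padicValInt p ((dN : ℕ) : ℤ) = 0 :=
      padicValInt.eq_zero_of_not_dvd (by rwa [Int.natCast_dvd_natCast])
    have hvN : 2 ≤ padicValInt p N := by
      rcases (padicValInt_dvd_iff 2 N).mp hNdvd with h | h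
      · exact absurd h h0
      · exact h
    rw [padicValRat.div hNQ hdNQ]
    rw [show ((dN : ℕ) : ℚ) = (((dN : ℕ) : ℤ) : ℚ) by push_cast; ring]
    rw [padicValRat.of_int (z := N), padicValRat.of_int (z := ((dN : ℕ) : ℤ)), v3]
    simp only [Nat.cast_zero, sub_zero]
    exact_mod_cast hvN
end
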